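/- Continued fraction expansion for the Fibonomial row polynomial: fix an integer n ≥ 0. In the ring of formal power series ℝ⟦x⟧, define g_{n+1} = 1 + (F_{2n+1}/F_{n+1}) x and, for m = n, n−1, …, 1, define g_m = 1 + (F_{n+m}/F_m) x − (F_{n+m+1}/F_{m+1}) x · g_{m+1}^{−1} (each g_m has constant term 1, hence is invertible). Then for every integer 0 ≤ k ≤ n+1, the coefficient of x^k in the power series 1 − F_{n+1} x · g_1^{−1} equals (−1)^{k(k+1)/2} C(n+1, k)_F. -/

import Mathlib

/-- The Fibonomial coefficient `C(n,k)_F = ∏_{r=1}^{k} F_{n-r+1}/F_r`, as a real number.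
It equals `0` when `k > n` and `1` when `k = 0`. -/
noncomputable def fibonomial (n k : ℕ) : ℝ :=
  ∏ r ∈ Finset.range k, (Nat.fib (n - r) : ℝ) / (Nat.fib (r + 1) : ℝ)

/-- The tail `g_{n+1-i}` of the continued fraction: `cfTail n i = g_{n+1-i}` where
`g_{n+1} = 1 + (F_{2n+1}/F_{n+1}) x` and, for `1 ≤ m ≤ n`,
`g_m = 1 + (F_{n+m}/F_m) x − (F_{n+m+1}/F_{m+1}) x ⬝ g_{m+1}⁻¹`. -/
noncomputable def cfTail (n : ℕ) : ℕ → PowerSeries ℝ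
  | 0 => 1 + PowerSeries.C ((Nat.fib (2 * n + 1) : ℝ) / (Nat.fib (n + 1) : ℝ)) *
      PowerSeries.X
  | (i + 1) =>
      1 + PowerSeries.C ((Nat.fib (n + (n - i)) : ℝ) / (Nat.fib (n - i) : ℝ)) *
          PowerSeries.X
        - PowerSeries.C ((Nat.fib (n + (n - i) + 1) : ℝ) / (Nat.fib ((n - i) + 1) : ℝ)) *
          PowerSeries.X * (cfTail n i)⁻¹

open Finset PowerSeries
open scoped goldenRatio

/-! ### Scalar lemmas -/

lemma fib_real_pos (k : ℕ) : (0:ℝ) < (Nat.fib (k+1) : ℝ) := by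
  exact_mod_cast Nat.fib_pos.mpr k.succ_pos

lemma fib_real_ne (k : ℕ) : (Nat.fib (k+1) : ℝ) ≠ 0 := ne_of_gt (fib_real_pos k)

lemma binet_add (a b : ℕ) :
    (Nat.fib (a+b) : ℝ) = φ^b * (Nat.fib a : ℝ) + ψ^a * (Nat.fib b : ℝ) := by
  rw [Real.coe_fib_eq, Real.coe_fib_eq, Real.coe_fib_eq]
  have h5 : Real.sqrt 5 ≠ 0 := by positivity
  have h : φ^b * ((φ^a - ψ^a)/√5) + ψ^a * ((φ^b - ψ^b)/√5)
      = (φ^b*(φ^a - ψ^a) + ψ^a*(φ^b - ψ^b))/√5 := by ring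
  rw [h, div_eq_div_iff h5 h5, pow_add]
  ring

lemma sign_succ (k : ℕ) :
    ((-1:ℝ))^((k+1)*(k+1+1)/2) = (-1:ℝ)^(k*(k+1)/2) * (-1:ℝ)^(k+1) := by
  have h : (k+1)*(k+1+1)/2 = k*(k+1)/2 + (k+1) := by
    have h2 : (k+1)*(k+1+1) = k*(k+1) + (k+1)*2 := by ring
    rw [h2, Nat.add_mul_div_right _ _ (by norm_num : (0:ℕ) < 2)]
  rw [h, pow_add]

/-! ### fibonomial lemmas -/

lemma fibonomial_zero (m : ℕ) : fibonomial m 0 = 1 := by simp [fibonomial]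

lemma fibonomial_succ (m k : ℕ) :
    fibonomial m (k+1) = fibonomial m k * ((Nat.fib (m-k) : ℝ) / (Nat.fib (k+1) : ℝ)) := by
  unfold fibonomial
  exact Finset.prod_range_succ _ _

lemma fibonomial_of_lt {m k : ℕ} (h : m < k) : fibonomial m k = 0 := by
  unfold fibonomial
  apply Finset.prod_eq_zero (Finset.mem_range.mpr h)
  simp

lemma fibonomial_succ_succ (m : ℕ) : ∀ k, k ≤ m →
    fibonomial (m+1) (k+1) = fibonomial m k * (Nat.fib (m+1) : ℝ) / (Nat.fib (k+1) : ℝ) := by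
  intro k
  induction k with
  | zero =>
    intro _
    simp [fibonomial_succ, fibonomial_zero]
  | succ k ih =>
    intro hk
    have hk' : k ≤ m := by omega
    rw [fibonomial_succ (m+1) (k+1), ih hk', fibonomial_succ m k]
    have h1 : (m+1) - (k+1) = m - k := by omega
    rw [h1]
    have h2 := fib_real_ne k
    have h3 := fib_real_ne (k+1)
    field_simp

lemma fibonomial_pascal (m k : ℕ) :
    fibonomial (m+1) (k+1)
      = φ^(k+1) * fibonomial m (k+1) + ψ^(m-k) * fibonomial m k := by
  rcases le_or_gt k m with h | h
  · rw [fibonomial_succ_succ m k h, fibonomial_succ m k]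
    have hb : (Nat.fib (m+1) : ℝ)
        = φ^(k+1) * (Nat.fib (m-k) : ℝ) + ψ^(m-k) * (Nat.fib (k+1) : ℝ) := by
      have := binet_add (m-k) (k+1)
      rwa [show (m-k) + (k+1) = m+1 by omega] at this
    rw [mul_div_assoc, hb, add_div, mul_div_assoc, mul_div_assoc,
      div_self (fib_real_ne k), mul_one]
    ring
  · rw [fibonomial_of_lt (show m < k+1 by omega), fibonomial_of_lt h,
      fibonomial_of_lt (show m+1 < k+1 by omega)]
    ring

/-! ### the product coefficients `uu` -/

/-- `uu n m k = ∏_{r<k} F_{n+m+1+r}/F_{m+1+r}`. -/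
noncomputable def uu (n m k : ℕ) : ℝ :=
  ∏ r ∈ Finset.range k, (Nat.fib (n+m+1+r) : ℝ) / (Nat.fib (m+1+r) : ℝ)

lemma uu_zero (n m : ℕ) : uu n m 0 = 1 := by simp [uu]

lemma uu_peel (n m k : ℕ) :
    uu n m (k+1) = (Nat.fib (n+m+1) : ℝ) / (Nat.fib (m+1) : ℝ) * uu n (m+1) k := by
  unfold uu
  rw [Finset.prod_range_succ']
  have h1 : ∀ r ∈ Finset.range k,
      (Nat.fib (n+m+1+(r+1)) : ℝ) / (Nat.fib (m+1+(r+1)) : ℝ)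
        = (Nat.fib (n+(m+1)+1+r) : ℝ) / (Nat.fib ((m+1)+1+r) : ℝ) := by
    intro r _
    rw [show n+m+1+(r+1) = n+(m+1)+1+r from by omega,
      show m+1+(r+1) = (m+1)+1+r from by omega]
  rw [Finset.prod_congr rfl h1, Nat.add_zero, Nat.add_zero, mul_comm]

lemma uu_eq_fibonomial (n k : ℕ) : uu n 0 k = fibonomial (n+k) k := by
  unfold uu fibonomial
  rw [Finset.prod_div_distrib, Finset.prod_div_distrib]
  congr 1
  · rw [← Finset.prod_range_reflect]
    apply Finset.prod_congr rfl
    intro r hr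
    have hr' : r < k := Finset.mem_range.mp hr
    rw [show n+0+1+(k-1-r) = n+k-r from by omega]
  · apply Finset.prod_congr rfl
    intro r _
    rw [show 0+1+r = r+1 from by omega]

lemma fibonomial_self (k : ℕ) : fibonomial k k = 1 := by
  have h := uu_eq_fibonomial 0 k
  rw [zero_add] at h
  rw [← h]
  unfold uu
  apply Finset.prod_eq_one
  intro r _
  rw [show 0+0+1+r = r+1 from by omega]
  exact div_self (fib_real_ne r)

/-! ### the row polynomial and the full series -/

/-- The signed Fibonomial row series `∑ (-1)^{k(k+1)/2} C(n+1,k)_F x^k`. -/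
noncomputable def rowP (n : ℕ) : PowerSeries ℝ :=
  PowerSeries.mk fun k => (-1:ℝ)^(k*(k+1)/2) * fibonomial (n+1) k

/-- The full series `∑ C(n+k,k)_F x^k`. -/
noncomputable def fullD (n : ℕ) : PowerSeries ℝ :=
  PowerSeries.mk fun k => fibonomial (n+k) k

lemma rowP_succ (n : ℕ) :
    rowP (n+1) = (1 - PowerSeries.C (ψ^(n+1)) * PowerSeries.X) * rescale φ (rowP n) := by
  have hexp : (1 - PowerSeries.C (ψ^(n+1)) * PowerSeries.X) * rescale φ (rowP n)
      = rescale φ (rowP n) - PowerSeries.C (ψ^(n+1)) * (PowerSeries.X * rescale φ (rowP n)) := by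
    ring
  rw [hexp]
  ext k
  cases k with
  | zero =>
    rw [map_sub, coeff_C_mul, coeff_zero_X_mul, mul_zero, sub_zero, coeff_rescale]
    simp [rowP, fibonomial_zero]
  | succ k =>
    rw [map_sub, coeff_C_mul, coeff_succ_X_mul, coeff_rescale, coeff_rescale]
    simp only [rowP, coeff_mk]
    rcases le_or_gt k (n+1) with h | h
    · rw [show n+1+1 = (n+1)+1 from rfl, fibonomial_pascal (n+1) k, sign_succ]
      have key : (-1:ℝ)^(k+1) * ψ^((n+1)-k) = -(ψ^(n+1) * φ^k) := by
        have h1 : (ψ:ℝ)^(n+1) = ψ^((n+1)-k) * ψ^k := by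
          rw [← pow_add]
          congr 1
          omega
        rw [h1, mul_assoc, ← mul_pow, Real.goldenConj_mul_goldenRatio, pow_succ]
        ring
      generalize hPhI : Real.goldenRatio = PP at key ⊢
      generalize hPsI : Real.goldenConj = QQ at key ⊢
      linear_combination ((-1:ℝ)^(k*(k+1)/2) * fibonomial (n+1) k) * key
    · rw [fibonomial_of_lt (show n+1 < k by omega), fibonomial_of_lt (show n+1 < k+1 by omega),
        fibonomial_of_lt (show n+1+1 < k+1 by omega)]
      ring

lemma fullD_succ (n : ℕ) :
    (1 - PowerSeries.C (ψ^(n+1)) * PowerSeries.X) * fullD (n+1) = rescale φ (fullD n) := by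
  have hexp : (1 - PowerSeries.C (ψ^(n+1)) * PowerSeries.X) * fullD (n+1)
      = fullD (n+1) - PowerSeries.C (ψ^(n+1)) * (PowerSeries.X * fullD (n+1)) := by
    ring
  rw [hexp]
  ext k
  cases k with
  | zero =>
    rw [map_sub, coeff_C_mul, coeff_zero_X_mul, mul_zero, sub_zero, coeff_rescale]
    simp [fullD, fibonomial_zero]
  | succ k =>
    rw [map_sub, coeff_C_mul, coeff_succ_X_mul, coeff_rescale]
    simp only [fullD, coeff_mk]
    have hp := fibonomial_pascal (n+k+1) k
    rw [show (n+k+1)-k = n+1 from by omega] at hp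
    rw [show n+1+(k+1) = (n+k+1)+1 from by omega, show n+1+k = n+k+1 from by omega,
      show n+(k+1) = n+k+1 from by omega, hp]
    ring

lemma rowP_mul_fullD (n : ℕ) : rowP n * fullD n = 1 := by
  induction n with
  | zero =>
    have hrow : rowP 0 = 1 - PowerSeries.X := by
      ext k
      match k with
      | 0 => simp [rowP, fibonomial_zero]
      | 1 => simp [rowP, fibonomial_succ, fibonomial_zero]
      | (k+2) =>
        rw [map_sub]
        simp only [rowP, coeff_mk, coeff_one, coeff_X]
        rw [fibonomial_of_lt (show 0+1 < k+2 from by omega)]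
        norm_num
        omega
    have hD : fullD 0 = PowerSeries.mk fun _ => (1:ℝ) := by
      ext k
      simp only [fullD, coeff_mk, zero_add]
      exact fibonomial_self k
    rw [hrow, hD]
    ext k
    cases k with
    | zero => simp
    | succ k =>
      rw [sub_mul, one_mul, map_sub, coeff_succ_X_mul]
      simp
  | succ n ih =>
    rw [rowP_succ]
    have h1 : (1 - PowerSeries.C (ψ^(n+1)) * PowerSeries.X) * rescale φ (rowP n) * fullD (n+1)
        = rescale φ (rowP n) * ((1 - PowerSeries.C (ψ^(n+1)) * PowerSeries.X) * fullD (n+1)) := by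
      ring
    rw [h1, fullD_succ, ← map_mul, ih, map_one]

lemma constantCoeff_fullD (n : ℕ) : PowerSeries.constantCoeff (fullD n) = 1 := by
  rw [← coeff_zero_eq_constantCoeff]
  simp [fullD, fibonomial_zero]

lemma fullD_inv (n : ℕ) : (fullD n)⁻¹ = rowP n := by
  rw [eq_comm, PowerSeries.eq_inv_iff_mul_eq_one]
  · exact rowP_mul_fullD n
  · rw [constantCoeff_fullD]
    norm_num

/-! ### the continued fraction numerators -/

/-- The numerator series of `cfTail n i` (a polynomial of degree `i+1`). -/
noncomputable def denS (n i : ℕ) : PowerSeries ℝ :=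
  PowerSeries.mk fun k => if k ≤ i+1 then uu n (n-i) k else 0

/-- The denominator series of `cfTail n i` (the numerator of the previous tail). -/
noncomputable def denP (n i : ℕ) : PowerSeries ℝ :=
  PowerSeries.mk fun k => if k ≤ i then uu n (n-i+1) k else 0

lemma constantCoeff_denS (n i : ℕ) : PowerSeries.constantCoeff (denS n i) = 1 := by
  rw [← coeff_zero_eq_constantCoeff]
  simp [denS, uu_zero]

lemma constantCoeff_denP (n i : ℕ) : PowerSeries.constantCoeff (denP n i) = 1 := by
  rw [← coeff_zero_eq_constantCoeff]
  simp [denP, uu_zero]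

lemma cf_key (n : ℕ) : ∀ i, i ≤ n → cfTail n i * denP n i = denS n i := by
  intro i
  induction i with
  | zero =>
    intro _
    have hP : denP n 0 = 1 := by
      ext k
      cases k with
      | zero => simp [denP, uu_zero]
      | succ k => simp [denP]
    rw [hP, mul_one]
    show (1 + PowerSeries.C ((Nat.fib (2*n+1) : ℝ)/(Nat.fib (n+1) : ℝ)) * PowerSeries.X) = _
    ext k
    match k with
    | 0 => simp [denS, uu_zero]
    | 1 =>
      rw [map_add, coeff_C_mul, coeff_one, coeff_X]
      simp only [denS, coeff_mk]
      norm_num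
      rw [uu_peel, uu_zero, mul_one, show n+n+1 = 2*n+1 from by omega]
    | (k+2) =>
      rw [map_add, coeff_C_mul, coeff_one, coeff_X]
      simp only [denS, coeff_mk]
      rw [if_neg (by omega), if_neg (by omega), if_neg (by omega)]
      norm_num
  | succ i ih =>
    intro hi
    have hi' : i ≤ n := by omega
    have hP2 : denP n (i+1) = denS n i := by
      unfold denP denS
      rw [show n - (i+1) + 1 = n - i from by omega]
    -- constant coefficient of cfTail n i is nonzero
    have hct : PowerSeries.constantCoeff (cfTail n i) ≠ 0 := by
      intro h0
      have := congrArg (PowerSeries.constantCoeff) (ih hi')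
      rw [map_mul, h0, zero_mul, constantCoeff_denS] at this
      exact zero_ne_one this
    have hinv : (cfTail n i)⁻¹ * denS n i = denP n i := by
      calc (cfTail n i)⁻¹ * denS n i
          = (cfTail n i)⁻¹ * (cfTail n i * denP n i) := by rw [ih hi']
        _ = ((cfTail n i)⁻¹ * cfTail n i) * denP n i := by ring
        _ = denP n i := by rw [PowerSeries.inv_mul_cancel _ hct, one_mul]
    rw [hP2]
    show (1 + PowerSeries.C ((Nat.fib (n+(n-i)) : ℝ)/(Nat.fib (n-i) : ℝ)) * PowerSeries.X
        - PowerSeries.C ((Nat.fib (n+(n-i)+1) : ℝ)/(Nat.fib ((n-i)+1) : ℝ)) * PowerSeries.X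
          * (cfTail n i)⁻¹) * denS n i = denS n (i+1)
    have hstep : (1 + PowerSeries.C ((Nat.fib (n+(n-i)) : ℝ)/(Nat.fib (n-i) : ℝ)) * PowerSeries.X
        - PowerSeries.C ((Nat.fib (n+(n-i)+1) : ℝ)/(Nat.fib ((n-i)+1) : ℝ)) * PowerSeries.X
          * (cfTail n i)⁻¹) * denS n i
        = denS n i + PowerSeries.C ((Nat.fib (n+(n-i)) : ℝ)/(Nat.fib (n-i) : ℝ))
            * (PowerSeries.X * denS n i)
          - PowerSeries.C ((Nat.fib (n+(n-i)+1) : ℝ)/(Nat.fib ((n-i)+1) : ℝ))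
            * (PowerSeries.X * ((cfTail n i)⁻¹ * denS n i)) := by
      ring
    rw [hstep, hinv]
    -- now a coefficientwise identity
    obtain ⟨m, hm⟩ : ∃ m, n - i = m + 1 := ⟨n - i - 1, by omega⟩
    have hm2 : n - i + 1 = m + 2 := by omega
    have hm3 : n - (i+1) = m := by omega
    have ha : n + (n-i) = n + m + 1 := by omega
    have hb : n + (n-i) + 1 = n + (m+1) + 1 := by omega
    ext k
    rw [map_sub, map_add, coeff_C_mul, coeff_C_mul]
    cases k with
    | zero =>
      rw [coeff_zero_X_mul, coeff_zero_X_mul, mul_zero, mul_zero, add_zero, sub_zero]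
      simp [denS, uu_zero, hm3]
    | succ k =>
      rw [coeff_succ_X_mul, coeff_succ_X_mul]
      simp only [denS, denP, coeff_mk, hm, hm2, hm3, ha, hb]
      have hA : uu n m (k+1) = (Nat.fib (n+m+1) : ℝ)/(Nat.fib (m+1) : ℝ) * uu n (m+1) k :=
        uu_peel n m k
      have hB : uu n (m+1) (k+1) = (Nat.fib (n+(m+1)+1) : ℝ)/(Nat.fib ((m+1)+1) : ℝ) * uu n (m+2) k := by
        have := uu_peel n (m+1) k
        rwa [show (m+1)+1 = m+2 from rfl] at this
      rcases le_or_gt k i with hk | hk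
      · rw [if_pos (by omega : k+1 ≤ i+1), if_pos (by omega : k ≤ i+1), if_pos hk,
          if_pos (by omega : k+1 ≤ i+1+1), hA, hB]
        ring
      · rcases Nat.eq_or_lt_of_le (by omega : i+1 ≤ k) with hk2 | hk2
        · rw [if_neg (by omega), if_pos (by omega : k ≤ i+1), if_neg (by omega),
            if_pos (by omega : k+1 ≤ i+1+1), hA]
          ring
        · rw [if_neg (by omega), if_neg (by omega), if_neg (by omega), if_neg (by omega)]
          ring

/-! ### inverse coefficients only depend on initial coefficients -/

lemma coeff_inv_congr (f g : PowerSeries ℝ) (K : ℕ)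
    (h : ∀ j, j ≤ K → PowerSeries.coeff j f = PowerSeries.coeff j g) :
    ∀ j, j ≤ K → PowerSeries.coeff j f⁻¹ = PowerSeries.coeff j g⁻¹ := by
  intro j
  induction j using Nat.strong_induction_on with
  | _ j ih =>
    intro hj
    have hc : PowerSeries.constantCoeff f = PowerSeries.constantCoeff g := by
      rw [← coeff_zero_eq_constantCoeff]
      exact h 0 (Nat.zero_le _ |>.trans hj)
    rw [PowerSeries.coeff_inv, PowerSeries.coeff_inv, hc]
    rcases eq_or_ne j 0 with h0 | h0
    · rw [if_pos h0, if_pos h0]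
    · rw [if_neg h0, if_neg h0]
      congr 1
      apply Finset.sum_congr rfl
      intro x hx
      have hx' : x.1 + x.2 = j := Finset.HasAntidiagonal.mem_antidiagonal.mp hx
      rcases lt_or_ge x.2 j with h2 | h2
      · rw [if_pos h2, if_pos h2, h x.1 (by omega), ih x.2 h2 (by omega)]
      · rw [if_neg (not_lt.mpr h2), if_neg (not_lt.mpr h2)]

/-! ### main theorem -/

/-- `cfTail n n = g_1`; the coefficients of `1 − F_{n+1} x ⬝ g_1⁻¹` up to degree `n+1`
are the signed Fibonomial coefficients. -/
theorem fibonomial_continued_fraction_row (n k : ℕ) (hk : k ≤ n + 1) :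
    PowerSeries.coeff k
        (1 - PowerSeries.C (Nat.fib (n + 1) : ℝ) * PowerSeries.X * (cfTail n n)⁻¹) =
      (-1 : ℝ) ^ (k * (k + 1) / 2) * fibonomial (n + 1) k := by
  have hkey := cf_key n n le_rfl
  have hct : PowerSeries.constantCoeff (cfTail n n) ≠ 0 := by
    intro h0
    have := congrArg (PowerSeries.constantCoeff) hkey
    rw [map_mul, h0, zero_mul, constantCoeff_denS] at this
    exact zero_ne_one this
  have hinv : (cfTail n n)⁻¹ * denS n n = denP n n := by
    calc (cfTail n n)⁻¹ * denS n n
        = (cfTail n n)⁻¹ * (cfTail n n * denP n n) := by rw [hkey]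
      _ = ((cfTail n n)⁻¹ * cfTail n n) * denP n n := by ring
      _ = denP n n := by rw [PowerSeries.inv_mul_cancel _ hct, one_mul]
  have hdenS : PowerSeries.constantCoeff (denS n n) ≠ 0 := by
    rw [constantCoeff_denS]; norm_num
  -- `denS n n − F_{n+1} x ⬝ denP n n = 1`
  have hone : denS n n - PowerSeries.C (Nat.fib (n+1) : ℝ) * (PowerSeries.X * denP n n) = 1 := by
    ext k
    cases k with
    | zero =>
      rw [map_sub, coeff_C_mul, PowerSeries.coeff_zero_X_mul, mul_zero, sub_zero]
      simp [denS, uu_zero]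
    | succ k =>
      rw [map_sub, coeff_C_mul, coeff_succ_X_mul]
      simp only [denS, denP, coeff_mk, Nat.sub_self, Nat.zero_add]
      rw [coeff_one]
      rcases le_or_gt k n with h | h
      · rw [if_pos (by omega : k+1 ≤ n+1), if_pos h, uu_peel]
        rw [show n+0+1 = n+1 from by omega, show (0:ℕ)+1 = 1 from rfl]
        simp [Nat.fib_one]
      · rw [if_neg (by omega), if_neg (by omega)]
        simp
  -- so the target series is `(denS n n)⁻¹`
  have htarget : 1 - PowerSeries.C (Nat.fib (n + 1) : ℝ) * PowerSeries.X * (cfTail n n)⁻¹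
      = (denS n n)⁻¹ := by
    rw [PowerSeries.eq_inv_iff_mul_eq_one hdenS]
    calc (1 - PowerSeries.C (Nat.fib (n + 1) : ℝ) * PowerSeries.X * (cfTail n n)⁻¹) * denS n n
        = denS n n - PowerSeries.C (Nat.fib (n+1) : ℝ)
            * (PowerSeries.X * ((cfTail n n)⁻¹ * denS n n)) := by ring
      _ = 1 := by rw [hinv, hone]
  rw [htarget]
  -- `denS n n` agrees with `fullD n` up to degree `n+1`
  have hagree : ∀ j, j ≤ n+1 → PowerSeries.coeff j (denS n n) = PowerSeries.coeff j (fullD n) := by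
    intro j hj
    simp only [denS, fullD, coeff_mk, Nat.sub_self]
    rw [if_pos hj, uu_eq_fibonomial]
  rw [coeff_inv_congr (denS n n) (fullD n) (n+1) hagree k hk, fullD_inv]
  simp [rowP]
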